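/- Let μ and μ' be two stable one-to-one matchings on M ∪ W. Then the number of men who strictly prefer μ to μ' equals the number of women who strictly prefer μ' to μ. -/

import Mathlib

/-! One-to-one matching framework.

`Matching M W` pairs men with women (or the outside option `none`), consistently.
Preferences are encoded by injective rank functions into `ℕ`
(a larger rank means more preferred); `none` is the outside option `∅`. -/

structure Matching (M W : Type*) where
  mu : M → Option W
  nu : W → Option M
  consistent : ∀ m w, mu m = some w ↔ nu w = some m

structure Prefs (M W : Type*) where
  prM : M → Option W → ℕ
  prW : W → Option M → ℕ
  injM : ∀ m, Function.Injective (prM m)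
  injW : ∀ w, Function.Injective (prW w)

variable {M W : Type*} [Fintype M] [Fintype W] [DecidableEq M] [DecidableEq W]

/-- `m` strictly prefers `x` to `y`. -/
def PrefM (P : Prefs M W) (m : M) (x y : Option W) : Prop := P.prM m y < P.prM m x

/-- `w` strictly prefers `x` to `y`. -/
def PrefW (P : Prefs M W) (w : W) (x y : Option M) : Prop := P.prW w y < P.prW w x

def IndivRational (P : Prefs M W) (μ : Matching M W) : Prop :=
  (∀ m w, μ.mu m = some w → PrefM P m (some w) none) ∧
  (∀ w m, μ.nu w = some m → PrefW P w (some m) none)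

def Blocks (P : Prefs M W) (μ : Matching M W) (m : M) (w : W) : Prop :=
  PrefM P m (some w) (μ.mu m) ∧ PrefW P w (some m) (μ.nu w)

def Stable (P : Prefs M W) (μ : Matching M W) : Prop :=
  IndivRational P μ ∧ ∀ m w, ¬ Blocks P μ m w

/-- A preference cycle `m₀ w₀ m₁ w₁ … m_k w_k m₀`: all agents distinct,
alternating between `M` and `W`; the successor of `m i` is `w i`, the
predecessor of `m i` is `w (i-1)`; the successor of `w i` is `m (i+1)`,
the predecessor of `w i` is `m i` (indices cyclic in `Fin (k+1)`).
Every agent strictly prefers its successor to its predecessor. -/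
def PrefCycle (P : Prefs M W) {k : ℕ} (ms : Fin (k + 1) → M) (ws : Fin (k + 1) → W) : Prop :=
  Function.Injective ms ∧ Function.Injective ws ∧
  (∀ i, PrefM P (ms i) (some (ws i)) (some (ws (i - 1)))) ∧
  (∀ i, PrefW P (ws i) (some (ms (i + 1))) (some (ms i)))


/-- The number of men strictly preferring μ to μ' equals the number of women
strictly preferring μ' to μ. -/

def Matching.swap (μ : Matching M W) : Matching W M where
  mu := μ.nu
  nu := μ.mu
  consistent := fun w m => (μ.consistent m w).symm

def Prefs.swap (P : Prefs M W) : Prefs W M where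
  prM := P.prW
  prW := P.prM
  injM := P.injW
  injW := P.injM

lemma Stable.swap {P : Prefs M W} {μ : Matching M W} (h : Stable P μ) :
    Stable P.swap μ.swap := by
  obtain ⟨⟨h1, h2⟩, h3⟩ := h
  exact ⟨⟨h2, h1⟩, fun w m hb => h3 m w ⟨hb.2, hb.1⟩⟩

lemma exists_mu_some (P : Prefs M W) (μ μ' : Matching M W) (hμ' : Stable P μ') (m : M)
    (hm : P.prM m (μ'.mu m) < P.prM m (μ.mu m)) : ∃ w, μ.mu m = some w := by
  cases h : μ.mu m with
  | some w => exact ⟨w, rfl⟩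
  | none =>
    rw [h] at hm
    cases h' : μ'.mu m with
    | none => rw [h'] at hm; exact absurd hm (lt_irrefl _)
    | some w' =>
      rw [h'] at hm
      exact absurd (hμ'.1.1 m w' h') (by simpa [PrefM] using hm.le.not_gt)

lemma key_le (P : Prefs M W) (μ μ' : Matching M W)
    (hμ : Stable P μ) (hμ' : Stable P μ') :
    (Finset.univ.filter (fun m : M => P.prM m (μ'.mu m) < P.prM m (μ.mu m))).card ≤
    (Finset.univ.filter (fun w : W => P.prW w (μ.nu w) < P.prW w (μ'.nu w))).card := by
  classical
  rw [← Finset.card_image_of_injective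
    (Finset.univ.filter (fun w : W => P.prW w (μ.nu w) < P.prW w (μ'.nu w)))
    (Option.some_injective W)]
  apply Finset.card_le_card_of_injOn μ.mu
  · intro m hm
    rw [Finset.mem_coe, Finset.mem_filter] at hm
    obtain ⟨-, hm⟩ := hm
    obtain ⟨w, hw⟩ := exists_mu_some P μ μ' hμ' m hm
    have hnu : μ.nu w = some m := (μ.consistent m w).mp hw
    have hwpref : P.prW w (μ.nu w) < P.prW w (μ'.nu w) := by
      by_contra hc
      push_neg at hc
      rcases lt_or_eq_of_le hc with hlt | heq
      · refine hμ'.2 m w ⟨?_, ?_⟩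
        · rw [PrefM, ← hw]; exact hm
        · rw [PrefW]; rw [hnu] at hlt; exact hlt
      · have h1 : μ'.nu w = μ.nu w := P.injW w heq
        rw [hnu] at h1
        have h2 : μ'.mu m = some w := (μ'.consistent m w).mpr h1
        rw [h2, hw] at hm
        exact lt_irrefl _ hm
    rw [hw]
    exact Finset.mem_image_of_mem _ (Finset.mem_filter.mpr ⟨Finset.mem_univ _, hwpref⟩)
  · intro a ha b hb hab
    simp only [Finset.coe_filter, Set.mem_setOf_eq] at ha hb
    obtain ⟨w, hw⟩ := exists_mu_some P μ μ' hμ' a ha.2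
    rw [hw] at hab
    have h1 := (μ.consistent a w).mp hw
    have h2 := (μ.consistent b w).mp hab.symm
    rw [h1] at h2
    exact Option.some.inj h2

theorem stmt18 (P : Prefs M W) (μ μ' : Matching M W)
    (hμ : Stable P μ) (hμ' : Stable P μ') :
    (Finset.univ.filter (fun m : M => P.prM m (μ'.mu m) < P.prM m (μ.mu m))).card =
    (Finset.univ.filter (fun w : W => P.prW w (μ.nu w) < P.prW w (μ'.nu w))).card := by
  refine le_antisymm (key_le P μ μ' hμ hμ') ?_
  exact key_le P.swap μ'.swap μ.swap hμ'.swap hμ.swap
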